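/- For every x ∈ [0,1] and every k ∈ [0,1), (1+x)^k·((k+1)x² − kx + 1) ≥ (1−x)^k·((k+1)x² + kx + 1), where powers are real powers. -/

import Mathlib

open Real

lemma f_hasDeriv (t : ℝ) (h1 : (1:ℝ)+t ≠ 0) (h2 : (1:ℝ)-t ≠ 0) :
    HasDerivAt (fun s : ℝ => Real.log (1+s) - Real.log (1-s)) (1/(1+t) + 1/(1-t)) t := by
  have ha : HasDerivAt (fun s : ℝ => 1+s) 1 t := (hasDerivAt_id t).const_add 1
  have hb : HasDerivAt (fun s : ℝ => 1-s) (-1) t := by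
    simpa using (hasDerivAt_id t).const_sub 1
  have := (ha.log h1).sub (hb.log h2)
  refine this.congr_deriv ?_
  ring

lemma logratio_convex :
    ConvexOn ℝ (Set.Ico (0:ℝ) 1) (fun s : ℝ => Real.log (1+s) - Real.log (1-s)) := by
  have hint : interior (Set.Ico (0:ℝ) 1) = Set.Ioo 0 1 := interior_Ico
  apply MonotoneOn.convexOn_of_deriv (convex_Ico 0 1)
  · intro t ht
    exact (f_hasDeriv t (by linarith [ht.1]) (by
      have : t < 1 := ht.2; intro h; linarith [sub_eq_zero.mp h])).continuousAt.continuousWithinAt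
  · rw [hint]
    intro t ht
    exact (f_hasDeriv t (by linarith [ht.1]) (by
      intro h; have := sub_eq_zero.mp h; linarith [ht.2])).differentiableAt.differentiableWithinAt
  · rw [hint]
    intro a ha b hb hab
    have hda := (f_hasDeriv a (by linarith [ha.1]) (by
      intro h; have := sub_eq_zero.mp h; linarith [ha.2])).deriv
    have hdb := (f_hasDeriv b (by linarith [hb.1]) (by
      intro h; have := sub_eq_zero.mp h; linarith [hb.2])).deriv
    rw [hda, hdb]
    have h1 : (0:ℝ) < (1+a)*(1-a) := by nlinarith [ha.1, ha.2]
    have h2 : (0:ℝ) < (1+b)*(1-b) := by nlinarith [hb.1, hb.2]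
    rw [div_add_div _ _ (by nlinarith [ha.1, ha.2]) (by nlinarith [ha.1, ha.2]),
      div_add_div _ _ (by nlinarith [hb.1, hb.2]) (by nlinarith [hb.1, hb.2]),
      div_le_div_iff₀ h1 h2]
    nlinarith [ha.1, hb.2]

lemma inner_ineq (x k : ℝ) (hx0 : 0 ≤ x) (hx1 : x < 1) (hk0 : 0 ≤ k) (hk1 : k ≤ 1) :
    Real.log (1+k*x) - Real.log (1-k*x) ≤ k * (Real.log (1+x) - Real.log (1-x)) := by
  have hc := logratio_convex
  have h0 : (0:ℝ) ∈ Set.Ico (0:ℝ) 1 := ⟨le_refl _, one_pos⟩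
  have hxm : x ∈ Set.Ico (0:ℝ) 1 := ⟨hx0, hx1⟩
  have h := hc.2 h0 hxm (by linarith : (0:ℝ) ≤ 1-k) hk0 (by ring)
  simp only [smul_eq_mul, mul_zero, zero_add, add_zero, sub_zero, Real.log_one] at h
  linarith [h]

lemma stepB (x k : ℝ) (hx0 : 0 ≤ x) (hx1 : x < 1) (hk0 : 0 ≤ k) (hk1 : k < 1) :
    (1-x)^k * (1+k*x) ≤ (1+x)^k * (1-k*x) := by
  have hkx1 : k*x < 1 := by nlinarith
  have hp1 : (0:ℝ) < 1+x := by linarith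
  have hp2 : (0:ℝ) < 1-x := by linarith
  have hp3 : (0:ℝ) < 1+k*x := by nlinarith
  have hp4 : (0:ℝ) < 1-k*x := by linarith
  have key := inner_ineq x k hx0 hx1 hk0 hk1.le
  rw [Real.rpow_def_of_pos hp2, Real.rpow_def_of_pos hp1]
  calc Real.exp (Real.log (1-x) * k) * (1+k*x)
      = Real.exp (Real.log (1-x) * k + Real.log (1+k*x)) := by
        rw [Real.exp_add, Real.exp_log hp3]
    _ ≤ Real.exp (Real.log (1+x) * k + Real.log (1-k*x)) := by
        apply Real.exp_le_exp.2
        nlinarith [key]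
    _ = Real.exp (Real.log (1+x) * k) * (1-k*x) := by
        rw [Real.exp_add, Real.exp_log hp4]

theorem f1_ge_f2 (x k : ℝ) (hx : x ∈ Set.Icc (0:ℝ) 1) (hk : k ∈ Set.Ico (0:ℝ) 1) :
    (1 - x) ^ k * ((k+1)*x^2 + k*x + 1) ≤ (1 + x) ^ k * ((k+1)*x^2 - k*x + 1) := by
  obtain ⟨hx0, hx1⟩ := hx
  obtain ⟨hk0, hk1⟩ := hk
  rcases eq_or_lt_of_le hx1 with h | hxlt
  · -- x = 1
    subst h
    rcases eq_or_lt_of_le hk0 with hk' | hk'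
    · subst hk'
      norm_num
    · rw [show (1:ℝ) - 1 = 0 by ring, Real.zero_rpow (ne_of_gt hk')]
      have h2 : (0:ℝ) ≤ (1+1:ℝ)^k := Real.rpow_nonneg (by norm_num) k
      nlinarith [h2]
  · have hB := stepB x k hx0 hxlt hk0 hk1
    have h1x : (0:ℝ) ≤ (1-x)^k := Real.rpow_nonneg (by linarith) k
    have h2x : (0:ℝ) ≤ (1+x)^k := Real.rpow_nonneg (by linarith) k
    have hkx : (0:ℝ) < 1 - k*x := by nlinarith
    have hP : (0:ℝ) < (k+1)*x^2 - k*x + 1 := by nlinarith [sq_nonneg x, mul_nonneg hk0 hx0]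
    have hA : ((k+1)*x^2 + k*x + 1) * (1-k*x) ≤ ((k+1)*x^2 - k*x + 1) * (1+k*x) := by
      nlinarith [mul_nonneg (mul_nonneg hk0 (by linarith : (0:ℝ) ≤ k+1)) (pow_nonneg hx0 3)]
    have t1 := mul_le_mul_of_nonneg_left hA h1x
    have t2 := mul_le_mul_of_nonneg_left hB hP.le
    nlinarith [t1, t2, hkx, mul_pos hkx hP]
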